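/- arXiv:0905.4276 — 2 statements merged into one kernel-verified Lean document; each statement's English description precedes it below -/
import Mathlib

section
/- Let B = (b_1,b_2,...) be an enumeration of ℚ ∩ [0,1] and let ā = (a_1,a_2,...) be the 2-Toeplitz sequence associated with B. Then for every c ∈ [0,1], the sequence (c,a_1,a_2,...) ∈ [0,1]^ℕ is minimal. -/
open Set unitInterval

/-- The left shift `S` on sequences: `S(x₁,x₂,x₃,…) = (x₂,x₃,…)`. -/
def shiftSeq {X : Type*} (z : ℕ → X) : ℕ → X := fun n => z (n + 1)

/-- The closure of the forward shift-orbit `{z, Sz, S²z, …}` of a sequence `z`,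
inside the sequence space `ℕ → X`.  (For a compact metric space `X` the product
topology on `ℕ → X` is exactly the topology of the metric
`d̄(x̄,ȳ) = ∑ᵢ d(xᵢ,yᵢ)/2ⁱ`.) -/
def shiftOrbitClosure {X : Type*} [TopologicalSpace X] (z : ℕ → X) : Set (ℕ → X) :=
  closure (Set.range fun k => shiftSeq^[k] z)

/-- A sequence `z` is *minimal* if the closure of its shift-orbit is a minimal
dynamical system under the shift, i.e. every point of this closure has dense
forward orbit in it. -/
def IsMinimalSeq {X : Type*} [TopologicalSpace X] (z : ℕ → X) : Prop :=
  ∀ w ∈ shiftOrbitClosure z, shiftOrbitClosure z ⊆ shiftOrbitClosure w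

/-- The 2-Toeplitz sequence of `B = (b 0, b 1, …)` (all sequences 0-indexed):
its `n`-th term is `b p` where `2 ^ p` exactly divides `n + 1`; equivalently the
term at (1-indexed) position `j` is `b_i` for all `j ≡ 2^(i-1) (mod 2^i)`. -/
def toeplitz2 {X : Type*} (b : ℕ → X) : ℕ → X :=
  fun n => b (padicValNat 2 (n + 1))

/-- Prepend a term to a sequence. -/
def consSeq {X : Type*} (c : X) (z : ℕ → X) : ℕ → X
  | 0 => c
  | n + 1 => z n

section Aux

open Filter Topology

lemma shiftSeq_iterate {X : Type*} (z : ℕ → X) (k n : ℕ) : shiftSeq^[k] z n = z (n + k) := by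
  induction k generalizing z n with
  | zero => rfl
  | succ k ih =>
    rw [Function.iterate_succ_apply, ih]
    rfl

lemma continuous_shiftSeq_iterate (k : ℕ) :
    Continuous (shiftSeq^[k] : (ℕ → I) → (ℕ → I)) := by
  apply continuous_pi
  intro n
  have h : (fun z : ℕ → I => shiftSeq^[k] z n) = fun z => z (n + k) :=
    funext fun z => shiftSeq_iterate z k n
  rw [h]
  exact continuous_apply _

lemma padicValNat_add_mul_pow {n M k : ℕ} (hn : 0 < n) (h : ¬ 2 ^ M ∣ n) :
    padicValNat 2 (n + k * 2 ^ M) = padicValNat 2 n := by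
  haveI : Fact (Nat.Prime 2) := ⟨Nat.prime_two⟩
  have hpos : n + k * 2 ^ M ≠ 0 := by positivity
  have hvM : padicValNat 2 n + 1 ≤ M := by
    by_contra hle
    exact h ((padicValNat_dvd_iff_le (p := 2) (a := n) (n := M) hn.ne').mpr (by omega))
  apply le_antisymm
  · by_contra hlt
    have h1 : 2 ^ (padicValNat 2 n + 1) ∣ n + k * 2 ^ M :=
      (padicValNat_dvd_iff_le hpos).mpr (by omega)
    have h2 : 2 ^ (padicValNat 2 n + 1) ∣ k * 2 ^ M :=
      Dvd.dvd.mul_left (pow_dvd_pow 2 hvM) k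
    have h3 : 2 ^ (padicValNat 2 n + 1) ∣ n := by
      have h4 := Nat.dvd_sub h1 h2
      rwa [Nat.add_sub_cancel] at h4
    exact pow_succ_padicValNat_not_dvd hn.ne' h3
  · apply (padicValNat_dvd_iff_le hpos).mp
    exact dvd_add pow_padicValNat_dvd
      (Dvd.dvd.mul_left (pow_dvd_pow 2 (by omega : padicValNat 2 n ≤ M)) k)

lemma toeplitz2_periodic {X : Type*} (b : ℕ → X) {j m : ℕ} (hj : j < m) (q : ℕ) :
    toeplitz2 b (j + q * 2 ^ (m + 1)) = toeplitz2 b j := by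
  unfold toeplitz2
  congr 1
  have h1 : j + q * 2 ^ (m + 1) + 1 = (j + 1) + q * 2 ^ (m + 1) := by ring
  rw [h1]
  apply padicValNat_add_mul_pow (Nat.succ_pos j)
  intro hdvd
  have h2 := Nat.le_of_dvd (Nat.succ_pos j) hdvd
  have h3 : m + 1 < 2 ^ (m + 1) := Nat.lt_two_pow_self
  omega

/-- Every point of the orbit closure of the Toeplitz sequence contains, at some shift,
an exact copy of the first `m` entries of the Toeplitz sequence. -/
lemma exists_window (b : ℕ → I) {w : ℕ → I} (hw : w ∈ shiftOrbitClosure (toeplitz2 b)) (m : ℕ) :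
    ∃ r : ℕ, ∀ j < m, w (j + r) = toeplitz2 b j := by
  set N := 2 ^ (m + 1) with hN
  have hN0 : 0 < N := by positivity
  set K : Set (ℕ → I) := {x | ∀ j < m, x j = toeplitz2 b j} with hK
  have hKclosed : IsClosed K := by
    have hKeq : K = ⋂ j ∈ Finset.range m, {x : ℕ → I | x j = toeplitz2 b j} := by
      ext x; simp [hK]
    rw [hKeq]
    exact isClosed_biInter fun j _ =>
      isClosed_eq (continuous_apply j) continuous_const
  set C : Set (ℕ → I) := ⋃ r ∈ Finset.range N, (shiftSeq^[r]) ⁻¹' K with hC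
  have hCclosed : IsClosed C :=
    isClosed_biUnion_finset fun r _ => hKclosed.preimage (continuous_shiftSeq_iterate r)
  have hsub : shiftOrbitClosure (toeplitz2 b) ⊆ C := by
    apply closure_minimal _ hCclosed
    rintro x ⟨k, rfl⟩
    have h2 : k / N * N + k % N = k := Nat.div_add_mod' k N
    have hmodlt : k % N < N := Nat.mod_lt _ hN0
    obtain ⟨r, q, hrN, hq⟩ : ∃ r q : ℕ, r < N ∧ k + r = q * N := by
      rcases Nat.eq_zero_or_pos (k % N) with h0 | h0
      · refine ⟨0, k / N, hN0, by omega⟩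
      · refine ⟨N - k % N, k / N + 1, by omega, ?_⟩
        rw [add_mul, one_mul]
        omega
    refine Set.mem_biUnion (Finset.mem_range.mpr hrN) ?_
    simp only [Set.mem_preimage, hK, Set.mem_setOf_eq]
    intro j hj
    rw [shiftSeq_iterate, shiftSeq_iterate]
    have h5 : j + r + k = j + q * N := by omega
    rw [h5, hN]
    exact toeplitz2_periodic b hj q
  obtain ⟨r, -, hr⟩ := Set.mem_iUnion₂.mp (hsub hw)
  refine ⟨r, fun j hj => ?_⟩
  have h6 : shiftSeq^[r] w j = toeplitz2 b j := hr j hj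
  rwa [shiftSeq_iterate] at h6

/-- Every neighbourhood of every point of `I` contains infinitely many terms of an
enumeration of the rationals of `I`. -/
lemma rat_indices_infinite (b : ℕ → I) (hinj : Function.Injective b)
    (hrange : Set.range b = {x : I | ∃ q : ℚ, (q : ℝ) = (x : ℝ)})
    (x : I) {V : Set I} (hV : V ∈ 𝓝 x) :
    {i : ℕ | b i ∈ V}.Infinite := by
  obtain ⟨ε, hε, hball⟩ := Metric.mem_nhds_iff.mp hV
  have hx0 : (0 : ℝ) ≤ (x : ℝ) := x.2.1
  have hx1 : (x : ℝ) ≤ 1 := x.2.2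
  obtain ⟨lo, hi, hlohi, H⟩ :
      ∃ lo hi : ℝ, lo < hi ∧ ∀ q : ℚ, lo < (q : ℝ) → (q : ℝ) < hi →
        ∃ hq : (q : ℝ) ∈ Set.Icc (0 : ℝ) 1, (⟨(q : ℝ), hq⟩ : I) ∈ V := by
    rcases lt_or_ge (x : ℝ) 1 with hxlt | hxge
    · refine ⟨(x : ℝ), min ((x : ℝ) + ε) 1, lt_min (by linarith) hxlt, ?_⟩
      intro q hq1 hq2
      have hq0 : (0 : ℝ) ≤ (q : ℝ) := le_of_lt (lt_of_le_of_lt hx0 hq1)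
      have hqle : (q : ℝ) ≤ 1 := le_of_lt (lt_of_lt_of_le hq2 (min_le_right _ _))
      refine ⟨⟨hq0, hqle⟩, hball ?_⟩
      rw [Metric.mem_ball, Subtype.dist_eq, Real.dist_eq]
      have h7 : (q : ℝ) < (x : ℝ) + ε := lt_of_lt_of_le hq2 (min_le_left _ _)
      rw [abs_lt]
      constructor <;> · simp only []; linarith
    · have hx1' : (x : ℝ) = 1 := le_antisymm hx1 hxge
      refine ⟨max (1 - ε) 0, 1, max_lt (by linarith) one_pos, ?_⟩
      intro q hq1 hq2
      have hq0 : (0 : ℝ) ≤ (q : ℝ) := le_of_lt (lt_of_le_of_lt (le_max_right _ _) hq1)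
      refine ⟨⟨hq0, le_of_lt hq2⟩, hball ?_⟩
      rw [Metric.mem_ball, Subtype.dist_eq, Real.dist_eq, hx1']
      have h8 : 1 - ε < (q : ℝ) := lt_of_le_of_lt (le_max_left _ _) hq1
      rw [abs_lt]
      constructor <;> · simp only []; linarith
  obtain ⟨q1, hq1a, hq1b⟩ := exists_rat_btwn hlohi
  obtain ⟨q2, hq2a, hq2b⟩ := exists_rat_btwn hq1b
  have hq12 : q1 < q2 := by exact_mod_cast hq2a
  set g : ℚ → I := fun q => Set.projIcc (0 : ℝ) 1 zero_le_one (q : ℝ) with hg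
  have hgval : ∀ q ∈ Set.Ioo q1 q2, ((g q : ℝ)) = (q : ℝ) := by
    intro q hq
    obtain ⟨hmem, -⟩ := H q (lt_trans hq1a (by exact_mod_cast hq.1))
      (lt_trans (by exact_mod_cast hq.2) hq2b)
    simp [hg, Set.projIcc_of_mem zero_le_one hmem]
  have hginj : Set.InjOn g (Set.Ioo q1 q2) := by
    intro p hp q hq hpq
    have h9 : ((p : ℝ)) = ((q : ℝ)) := by
      rw [← hgval p hp, ← hgval q hq, hpq]
    exact_mod_cast h9
  by_contra hfin
  rw [Set.not_infinite] at hfin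
  have himg : g '' Set.Ioo q1 q2 ⊆ b '' {i : ℕ | b i ∈ V} := by
    rintro y ⟨q, hq, rfl⟩
    have hlo : lo < (q : ℝ) := lt_trans hq1a (by exact_mod_cast hq.1)
    have hhi : (q : ℝ) < hi := lt_trans (by exact_mod_cast hq.2) hq2b
    obtain ⟨hmem, hV'⟩ := H q hlo hhi
    have hgq : g q = (⟨(q : ℝ), hmem⟩ : I) := Subtype.ext (hgval q hq)
    have hrat : g q ∈ Set.range b := by
      rw [hrange]
      exact ⟨q, by rw [hgq]⟩
    obtain ⟨i, hi'⟩ := hrat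
    refine ⟨i, ?_, hi'⟩
    show b i ∈ V
    rw [hi', hgq]
    exact hV'
  have h1 : (g '' Set.Ioo q1 q2).Finite := (hfin.image b).subset himg
  exact Set.Ioo_infinite hq12 (Set.Finite.of_finite_image h1 hginj)

end Aux

open Filter Topology in
/-- If `b` is an enumeration of `ℚ ∩ [0,1]` and `ā` is its 2-Toeplitz sequence,
then `(c, a₁, a₂, …)` is minimal for every `c ∈ [0,1]`. -/
theorem cons_toeplitz2_of_rat_enumeration_isMinimalSeq
    (b : ℕ → I) (hinj : Function.Injective b)
    (hrange : Set.range b = {x : I | ∃ q : ℚ, (q : ℝ) = (x : ℝ)})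
    (c : I) :
    IsMinimalSeq (consSeq c (toeplitz2 b)) := by
  classical
  haveI : Fact (Nat.Prime 2) := ⟨Nat.prime_two⟩
  have hshift : shiftSeq (consSeq c (toeplitz2 b)) = toeplitz2 b := funext fun n => rfl
  -- Step 1: `consSeq c (toeplitz2 b)` belongs to the orbit closure of `toeplitz2 b`.
  have h1 : consSeq c (toeplitz2 b) ∈ shiftOrbitClosure (toeplitz2 b) := by
    rw [shiftOrbitClosure, mem_closure_iff_nhds]
    intro U hU
    rw [nhds_pi, Filter.mem_pi] at hU
    obtain ⟨F, hF, t, ht, hsub⟩ := hU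
    obtain ⟨m, hm⟩ : ∃ m : ℕ, ∀ i ∈ F, i < m := by
      obtain ⟨m, hm⟩ := hF.bddAbove
      exact ⟨m + 1, fun i hi => Nat.lt_succ_of_le (hm hi)⟩
    have ht0 : t 0 ∈ 𝓝 (consSeq c (toeplitz2 b) 0) := ht 0
    obtain ⟨i, hiV, hmi⟩ :=
      (rat_indices_infinite b hinj hrange (consSeq c (toeplitz2 b) 0) ht0).exists_gt m
    have h2i : 1 ≤ 2 ^ i := Nat.one_le_two_pow
    have h2i' : i < 2 ^ i := Nat.lt_two_pow_self
    refine ⟨shiftSeq^[2 ^ i - 1] (toeplitz2 b), hsub ?_, ⟨2 ^ i - 1, rfl⟩⟩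
    rw [Set.mem_pi]
    intro j hjF
    have hjm : j < m := hm j hjF
    match j with
    | 0 =>
      have key : shiftSeq^[2 ^ i - 1] (toeplitz2 b) 0 = b i := by
        rw [shiftSeq_iterate]
        show b (padicValNat 2 (0 + (2 ^ i - 1) + 1)) = b i
        congr 1
        rw [(by omega : 0 + (2 ^ i - 1) + 1 = 2 ^ i)]
        exact padicValNat.prime_pow i
      rw [key]
      exact hiV
    | Nat.succ j' =>
      have hj' : j' + 1 < 2 ^ i := by omega
      have key : shiftSeq^[2 ^ i - 1] (toeplitz2 b) (j' + 1) =
          consSeq c (toeplitz2 b) (j' + 1) := by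
        rw [shiftSeq_iterate]
        show b (padicValNat 2 (j' + 1 + (2 ^ i - 1) + 1)) = b (padicValNat 2 (j' + 1))
        congr 1
        rw [(by omega : j' + 1 + (2 ^ i - 1) + 1 = (j' + 1) + 1 * 2 ^ i)]
        exact padicValNat_add_mul_pow (Nat.succ_pos j') fun hd => by
          have h10 := Nat.le_of_dvd (Nat.succ_pos j') hd
          omega
      rw [key]
      exact mem_of_mem_nhds (ht (j' + 1))
  -- Step 2: the two orbit closures coincide.
  have horb : shiftOrbitClosure (consSeq c (toeplitz2 b)) = shiftOrbitClosure (toeplitz2 b) := by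
    apply Set.Subset.antisymm
    · apply closure_minimal _ isClosed_closure
      rintro x ⟨k, rfl⟩
      match k with
      | 0 => exact h1
      | Nat.succ k' =>
        show shiftSeq^[k' + 1] (consSeq c (toeplitz2 b)) ∈ _
        rw [Function.iterate_succ_apply, hshift]
        exact subset_closure ⟨k', rfl⟩
    · apply closure_mono
      rintro x ⟨k, rfl⟩
      refine ⟨k + 1, ?_⟩
      show shiftSeq^[k + 1] (consSeq c (toeplitz2 b)) = _
      rw [Function.iterate_succ_apply, hshift]
  -- Step 3: minimality.
  intro w hw
  rw [horb] at hw ⊢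
  have ha_mem : toeplitz2 b ∈ shiftOrbitClosure w := by
    rw [shiftOrbitClosure, mem_closure_iff_nhds]
    intro U hU
    rw [nhds_pi, Filter.mem_pi] at hU
    obtain ⟨F, hF, t, ht, hsub⟩ := hU
    obtain ⟨m, hm⟩ : ∃ m : ℕ, ∀ i ∈ F, i < m := by
      obtain ⟨m, hm⟩ := hF.bddAbove
      exact ⟨m + 1, fun i hi => Nat.lt_succ_of_le (hm hi)⟩
    obtain ⟨r, hr⟩ := exists_window b hw m
    refine ⟨shiftSeq^[r] w, hsub ?_, ⟨r, rfl⟩⟩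
    rw [Set.mem_pi]
    intro j hjF
    have key : shiftSeq^[r] w j = toeplitz2 b j := by
      rw [shiftSeq_iterate]
      exact hr j (hm j hjF)
    rw [key]
    exact mem_of_mem_nhds (ht j)
  apply closure_minimal _ isClosed_closure
  rintro x ⟨k, rfl⟩
  refine map_mem_closure (continuous_shiftSeq_iterate k) ha_mem ?_
  rintro x' ⟨j, rfl⟩
  exact ⟨k + j, Function.iterate_add_apply shiftSeq k j w⟩
end

section
/- (Weiss) The infinite fan F = {(r cos θ, r sin θ) : r ∈ [0,1], θ ∈ {2π, 2π/2, 2π/3, ...}} ⊂ ℝ², with the Euclidean metric, is a universal minimality detector: for every compact metric space (X,d) and every non-minimal sequence x̄ = (x_1,x_2,...) ∈ X^ℕ, there exists a continuous function f : X → F such that the sequence (f(x_1),f(x_2),...) ∈ F^ℕ is not minimal. -/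
open Set unitInterval

noncomputable section

/-- The infinite fan `{(r cos θ, r sin θ) : r ∈ [0,1], θ ∈ {2π, 2π/2, 2π/3, …}}`
as a subspace of the Euclidean plane. -/
def infiniteFan : Set (EuclideanSpace ℝ (Fin 2)) :=
  {p | ∃ r ∈ Set.Icc (0 : ℝ) 1, ∃ n : ℕ, 0 < n ∧
    p = ![r * Real.cos (2 * Real.pi / n), r * Real.sin (2 * Real.pi / n)]}


open Real

section Dyn
variable {X : Type*} [TopologicalSpace X]

lemma continuous_shiftSeq : Continuous (shiftSeq (X := X)) :=
  continuous_pi fun n => continuous_apply (n + 1)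

lemma shiftSeq_mem_orbitClosure {w z : ℕ → X} (h : z ∈ shiftOrbitClosure w) :
    shiftSeq z ∈ shiftOrbitClosure w := by
  have h1 : shiftSeq z ∈ closure (shiftSeq '' (Set.range fun k => shiftSeq^[k] w)) :=
    image_closure_subset_closure_image continuous_shiftSeq ⟨z, h, rfl⟩
  refine closure_mono ?_ h1
  rintro _ ⟨_, ⟨k, rfl⟩, rfl⟩
  exact ⟨k + 1, by simp only [Function.iterate_succ_apply']⟩

lemma orbitClosure_subset {w z : ℕ → X} (h : z ∈ shiftOrbitClosure w) :
    shiftOrbitClosure z ⊆ shiftOrbitClosure w := by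
  apply closure_minimal ?_ isClosed_closure
  rintro _ ⟨k, rfl⟩
  induction k with
  | zero => simpa [shiftOrbitClosure] using h
  | succ k ih =>
    simp only [Function.iterate_succ_apply']
    exact shiftSeq_mem_orbitClosure ih

omit [TopologicalSpace X] in
lemma comp_iterate {Y : Type*} (f : X → Y) (k : ℕ) (z : ℕ → X) :
    (fun n => f (shiftSeq^[k] z n)) = shiftSeq^[k] (fun n => f (z n)) := by
  induction k with
  | zero => rfl
  | succ k ih =>
    rw [Function.iterate_succ_apply', Function.iterate_succ_apply', ← ih]
    rfl

end Dyn

lemma exists_window_s13 {X : Type*} [MetricSpace X] {M : Set (ℕ → X)} (hM : IsClosed M)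
    {x : ℕ → X} (hx : x ∉ M) : ∃ N, ∀ m ∈ M, ∃ i < N, m i ≠ x i := by
  by_contra h
  push_neg at h
  choose m hmM hmi using h
  have htend : Filter.Tendsto m Filter.atTop (nhds x) := by
    rw [tendsto_pi_nhds]
    intro i
    apply Filter.Tendsto.congr' ?_ (tendsto_const_nhds (x := x i))
    filter_upwards [Filter.eventually_ge_atTop (i + 1)] with n hn
    exact (hmi n i (by omega)).symm
  exact hx (hM.mem_of_tendsto htend (Filter.Eventually.of_forall hmM))


lemma mem_Ioc_angle {m : ℕ} (hm : 0 < m) : 2*π/m ∈ Set.Ioc 0 (2*π) := by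
  constructor
  · apply div_pos (by positivity)
    exact_mod_cast hm
  · exact div_le_self (by positivity) (by exact_mod_cast hm)

lemma fan_angle_inj {m n : ℕ} (hm : 0 < m) (hn : 0 < n)
    (hc : Real.cos (2*π/m) = Real.cos (2*π/n))
    (hs : Real.sin (2*π/m) = Real.sin (2*π/n)) : m = n := by
  set α := 2*π/(m:ℝ) with hα
  set β := 2*π/(n:ℝ) with hβ
  obtain ⟨hα0, hα1⟩ := mem_Ioc_angle hm
  obtain ⟨hβ0, hβ1⟩ := mem_Ioc_angle hn
  have hexp : Complex.exp (α * Complex.I) = Complex.exp (β * Complex.I) := by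
    rw [Complex.exp_mul_I, Complex.exp_mul_I, ← Complex.ofReal_cos, ← Complex.ofReal_sin,
      ← Complex.ofReal_cos, ← Complex.ofReal_sin, hc, hs]
  rw [Complex.exp_eq_exp_iff_exists_int] at hexp
  obtain ⟨k, hk⟩ := hexp
  have hk' : α = β + k * (2*π) := by
    have := congrArg Complex.im hk
    simpa using this
  have hk0 : k = 0 := by
    rcases lt_trichotomy k 0 with h | h | h
    · exfalso
      have : (k:ℝ) ≤ -1 := by exact_mod_cast (by omega : k ≤ -1)
      nlinarith [pi_pos]
    · exact h
    · exfalso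
      have : (1:ℝ) ≤ (k:ℝ) := by exact_mod_cast h
      nlinarith [pi_pos]
  rw [hk0] at hk'
  simp at hk'
  -- hk' : α = β
  have hmn : (m:ℝ) = (n:ℝ) := by
    rw [hα, hβ, div_eq_div_iff (by positivity) (by positivity)] at hk'
    have h2π : (2:ℝ) * π ≠ 0 := by positivity
    exact (mul_left_cancel₀ h2π hk').symm
  exact_mod_cast hmn

lemma exists_good_map {X : Type*} [MetricSpace X] (x : ℕ → X) (N : ℕ) :
    ∃ f : X → infiniteFan, Continuous f ∧ ∀ i < N, ∀ z : X, f z = f (x i) → z = x i := by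
  classical
  set T : Finset ℕ := (Finset.range N).filter (fun i => ∀ j < i, x j ≠ x i) with hT
  have hTinj : ∀ i ∈ T, ∀ j ∈ T, x i = x j → i = j := by
    intro i hi j hj h
    rw [hT, Finset.mem_filter] at hi hj
    rcases lt_trichotomy i j with hij | hij | hij
    · exact absurd h (hj.2 i hij)
    · exact hij
    · exact absurd h.symm (hi.2 j hij)
  have hrep : ∀ i < N, ∃ i' ∈ T, x i' = x i := by
    intro i hi
    have hex : ∃ j, x j = x i := ⟨i, rfl⟩
    refine ⟨Nat.find hex, ?_, Nat.find_spec hex⟩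
    rw [hT, Finset.mem_filter, Finset.mem_range]
    refine ⟨lt_of_le_of_lt (Nat.find_min' hex rfl) hi, fun j hj => ?_⟩
    rw [Nat.find_spec hex]
    exact Nat.find_min hex hj
  set η : ℝ := if h : T.offDiag.Nonempty then T.offDiag.inf' h (fun p => dist (x p.1) (x p.2)) else 1
    with hηdef
  have hη0 : 0 < η := by
    rw [hηdef]
    split_ifs with h
    · rw [Finset.lt_inf'_iff]
      rintro ⟨i, j⟩ hij
      rw [Finset.mem_offDiag] at hij
      rw [dist_pos]
      exact fun he => hij.2.2 (hTinj i hij.1 j hij.2.1 he)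
    · exact one_pos
  have hηle : ∀ i ∈ T, ∀ j ∈ T, i ≠ j → η ≤ dist (x i) (x j) := by
    intro i hi j hj hij
    have hne : T.offDiag.Nonempty := ⟨(i, j), Finset.mem_offDiag.2 ⟨hi, hj, hij⟩⟩
    rw [hηdef, dif_pos hne]
    exact Finset.inf'_le (fun p => dist (x p.1) (x p.2))
      (show (i,j) ∈ T.offDiag from Finset.mem_offDiag.2 ⟨hi, hj, hij⟩)
  set r : ℝ := min η 1 / 3 with hrdef
  have hmin0 : 0 < min η 1 := lt_min hη0 one_pos
  have hr0 : 0 < r := by rw [hrdef]; linarith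
  have h2r : 2 * r < η := by
    have h1 : min η 1 ≤ η := min_le_left _ _
    rw [hrdef]; linarith
  set t : ℕ → X → ℝ := fun i z => max 0 (1 - dist z (x i) / r) with htdef
  have ht0 : ∀ i z, 0 ≤ t i z := fun i z => le_max_left _ _
  have ht1 : ∀ i z, t i z ≤ 1 := by
    intro i z
    apply max_le zero_le_one
    have : 0 ≤ dist z (x i) / r := by positivity
    linarith
  have htx : ∀ i, t i (x i) = 1 := by
    intro i; rw [htdef]; simp
  have htpos : ∀ i z, 0 < t i z → dist z (x i) < r := by
    intro i z h
    rw [htdef] at h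
    rcases lt_max_iff.1 h with h' | h'
    · exact absurd h' (lt_irrefl 0)
    · rw [sub_pos] at h'
      exact (div_lt_one hr0).1 h'
  have hteq1 : ∀ i z, t i z = 1 → z = x i := by
    intro i z h
    simp only [htdef] at h
    rcases max_cases (0:ℝ) (1 - dist z (x i) / r) with ⟨he, _⟩ | ⟨he, _⟩ <;> rw [he] at h
    · norm_num at h
    · have : dist z (x i) / r = 0 := by linarith
      have := (div_eq_zero_iff.1 this).resolve_right hr0.ne'
      exact dist_eq_zero.1 this
  have htcont : ∀ i, Continuous (t i) := by
    intro i
    exact continuous_const.max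
      (continuous_const.sub ((continuous_id.dist continuous_const).div_const r))
  set v : ℕ → EuclideanSpace ℝ (Fin 2) :=
    fun i => WithLp.toLp 2 ![Real.cos (2 * π / (i+1 : ℕ)), Real.sin (2 * π / (i+1 : ℕ))] with hvdef
  set f₀ : X → EuclideanSpace ℝ (Fin 2) := fun z => ∑ i ∈ T, t i z • v i with hf₀def
  have hdisj : ∀ z, ∀ i ∈ T, ∀ j ∈ T, 0 < t i z → 0 < t j z → i = j := by
    intro z i hi j hj hti htj
    by_contra hij
    have h1 := htpos i z hti
    have h2 := htpos j z htj
    have h3 := hηle i hi j hj hij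
    have h4 := dist_triangle (x i) z (x j)
    rw [dist_comm (x i) z] at h4
    linarith
  have hsingle : ∀ z, ∀ i ∈ T, 0 < t i z → f₀ z = t i z • v i := by
    intro z i hi h
    rw [hf₀def]
    apply Finset.sum_eq_single_of_mem i hi
    intro j hj hne
    have : t j z = 0 := by
      rcases (ht0 j z).eq_or_lt with h' | h'
      · exact h'.symm
      · exact absurd (hdisj z j hj i hi h' h) hne
    rw [this, zero_smul]
  have hzero : ∀ z, (∀ i ∈ T, t i z ≤ 0) → f₀ z = 0 := by
    intro z h
    rw [hf₀def]
    apply Finset.sum_eq_zero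
    intro i hi
    rw [le_antisymm (h i hi) (ht0 i z), zero_smul]
  have hsmul_eval : ∀ (c : ℝ) (a b : ℝ), c • (WithLp.toLp 2 ![a, b] : EuclideanSpace ℝ (Fin 2)) = WithLp.toLp 2 ![c * a, c * b] := by
    intro c a b
    ext j
    fin_cases j <;> simp [Matrix.cons_val_zero, Matrix.cons_val_one]
  have hmem : ∀ z, f₀ z ∈ infiniteFan := by
    intro z
    by_cases hc : ∃ i ∈ T, 0 < t i z
    · obtain ⟨i, hi, hp⟩ := hc
      rw [hsingle z i hi hp]
      refine ⟨t i z, ⟨ht0 i z, ht1 i z⟩, i + 1, Nat.succ_pos i, ?_⟩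
      rw [hvdef]
      exact congrArg WithLp.ofLp (hsmul_eval _ _ _)
    · push_neg at hc
      rw [hzero z hc]
      refine ⟨0, ⟨le_refl 0, zero_le_one⟩, 1, one_pos, ?_⟩
      funext j
      fin_cases j <;> simp
  have hpeakT : ∀ i ∈ T, ∀ z : X, f₀ z = f₀ (x i) → z = x i := by
    intro i hi z hz
    have hfx : f₀ (x i) = v i := by
      rw [hsingle (x i) i hi (by rw [htx]; exact one_pos), htx, one_smul]
    rw [hfx] at hz
    have hpyth_i := Real.sin_sq_add_cos_sq (2 * π / (i+1 : ℕ))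
    by_cases hc : ∃ j ∈ T, 0 < t j z
    · obtain ⟨j, hj, hp⟩ := hc
      rw [hsingle z j hj hp, hvdef, hsmul_eval] at hz
      have h0 := congrFun (congrArg WithLp.ofLp hz) 0
      have h1 := congrFun (congrArg WithLp.ofLp hz) 1
      simp only [hvdef, WithLp.ofLp_toLp, Matrix.cons_val_zero, Matrix.cons_val_one, Matrix.head_cons] at h0 h1
      have hpyth_j := Real.sin_sq_add_cos_sq (2 * π / (j+1 : ℕ))
      have ht2 : (t j z)^2 = 1 := by
        have e1 : (t j z)^2 * (Real.sin (2 * π / (j+1 : ℕ))^2 + Real.cos (2 * π / (j+1 : ℕ))^2)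
            = Real.sin (2 * π / (i+1 : ℕ))^2 + Real.cos (2 * π / (i+1 : ℕ))^2 := by
          rw [← h0, ← h1]; ring
        rw [hpyth_j, hpyth_i, mul_one] at e1
        exact e1
      have htj1 : t j z = 1 := by
        have hfac : (t j z - 1) * (t j z + 1) = 0 := by nlinarith
        rcases mul_eq_zero.1 hfac with h | h
        · linarith
        · linarith
      rw [htj1, one_mul] at h0 h1
      have hji : j = i := by
        have := fan_angle_inj (Nat.succ_pos j) (Nat.succ_pos i) h0 h1
        omega
      rw [← hji]
      exact hteq1 j z htj1
    · exfalso
      push_neg at hc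
      rw [hzero z hc] at hz
      have h0 : Real.cos (2 * π / (i+1 : ℕ)) = 0 := by
        have := congrFun (congrArg WithLp.ofLp hz.symm) 0
        simpa [hvdef] using this
      have h1 : Real.sin (2 * π / (i+1 : ℕ)) = 0 := by
        have := congrFun (congrArg WithLp.ofLp hz.symm) 1
        simpa [hvdef] using this
      rw [h0, h1] at hpyth_i
      norm_num at hpyth_i
  refine ⟨fun z => ⟨f₀ z, hmem z⟩, ?_, ?_⟩
  · apply Continuous.subtype_mk
    apply continuous_finset_sum
    intro i _
    exact (htcont i).smul continuous_const
  · intro i hiN z hz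
    obtain ⟨i', hi', hxi⟩ := hrep i hiN
    rw [Subtype.ext_iff] at hz
    simp only at hz
    rw [← hxi] at hz ⊢
    exact hpeakT i' hi' z hz

/-- (Weiss) The infinite fan is a universal minimality detector: for every
compact metric space `X` and every non-minimal sequence `x̄ ∈ Xᴺ` there is a
continuous `f : X → F` such that `(f x₁, f x₂, …)` is not minimal. -/
theorem infiniteFan_is_universal_minimality_detector
    {X : Type*} [MetricSpace X] [CompactSpace X]
    (x : ℕ → X) (hx : ¬ IsMinimalSeq x) :
    ∃ f : X → infiniteFan, Continuous f ∧ ¬ IsMinimalSeq (fun n => f (x n)) := by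
  rw [IsMinimalSeq] at hx
  push_neg at hx
  obtain ⟨w₀, hw₀Z, hns⟩ := hx
  have hxM : x ∉ shiftOrbitClosure w₀ := fun h => hns (orbitClosure_subset h)
  obtain ⟨N, hN⟩ := exists_window_s13 (M := shiftOrbitClosure w₀) isClosed_closure hxM
  obtain ⟨f, hf, hpeak⟩ := exists_good_map x N
  refine ⟨f, hf, ?_⟩
  intro hmin
  set Φ : (ℕ → X) → (ℕ → infiniteFan) := fun z n => f (z n) with hΦdef
  have hΦc : Continuous Φ := continuous_pi fun n => hf.comp (continuous_apply n)
  have hw' : Φ w₀ ∈ shiftOrbitClosure (Φ x) := by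
    have h1 : Φ w₀ ∈ closure (Φ '' (Set.range fun k => shiftSeq^[k] x)) :=
      image_closure_subset_closure_image hΦc ⟨w₀, hw₀Z, rfl⟩
    refine closure_mono ?_ h1
    rintro _ ⟨_, ⟨k, rfl⟩, rfl⟩
    exact ⟨k, (comp_iterate f k x).symm⟩
  have h1 : Φ x ∈ shiftOrbitClosure (Φ w₀) :=
    hmin (Φ w₀) hw' (subset_closure ⟨0, rfl⟩)
  have h2 : shiftOrbitClosure (Φ w₀) ⊆ Φ '' (shiftOrbitClosure w₀) := by
    have hK : IsCompact (shiftOrbitClosure w₀) := (isClosed_closure).isCompact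
    have hKc : IsClosed (Φ '' shiftOrbitClosure w₀) := (hK.image hΦc).isClosed
    apply closure_minimal ?_ hKc
    rintro _ ⟨k, rfl⟩
    exact ⟨shiftSeq^[k] w₀, subset_closure ⟨k, rfl⟩, comp_iterate f k w₀⟩
  obtain ⟨m, hmM, hme⟩ := h2 h1
  obtain ⟨i, hiN, hne⟩ := hN m hmM
  exact hne (hpeak i hiN (m i) (congrFun hme i))

end
end
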